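/- Let u, v ∈ ℍ^{n+1} be non-proportional null vectors with ⟨u,v⟩ = −1, and let z ∈ ℍ^{n+1} be a negative vector. Set η = ⟨u,z⟩⟨u,v⟩⁻¹⟨z,v⟩⟨z,z⟩⁻¹ and γ(t) = u e^{t/2} + v e^{−t/2} for t ∈ ℝ (so ⟨γ(t),γ(t)⟩ = −2). Then the infimum over t ∈ ℝ of |⟨z,γ(t)⟩|² / (⟨z,z⟩·⟨γ(t),γ(t)⟩) equals |η| + Re(η). (Equivalently, cosh²(ρ(γ_{uv},z)/2) = |η| + Re(η), where ρ(γ_{uv},z) is the Bergman distance from the point represented by z to the geodesic with endpoints represented by u and v.) -/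

import Mathlib

open scoped Quaternion

noncomputable section

/-- The quaternionic Hermitian form of signature (n,1) on ℍ^{n+1}:
`⟨z,w⟩ = w̄₁ z_{n+1} + Σ_{i=2}^n w̄ᵢ zᵢ + w̄_{n+1} z₁`. -/
noncomputable def herm {n : ℕ} (z w : Fin (n+1) → ℍ[ℝ]) : ℍ[ℝ] :=
  star (w 0) * z (Fin.last n)
    + ∑ i ∈ Finset.Ioo (0 : Fin (n+1)) (Fin.last n), star (w i) * z i
    + star (w (Fin.last n)) * z 0

/-- `w` is (right-)proportional to `z`: `w = zλ` for some `λ ∈ ℍ`. -/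
def Prp {n : ℕ} (z w : Fin (n+1) → ℍ[ℝ]) : Prop :=
  ∃ lam : ℍ[ℝ], w = fun i => z i * lam

/-- Right scalar multiplication on ℍ^{n+1}. -/
noncomputable def smulR {n : ℕ} (z : Fin (n+1) → ℍ[ℝ]) (lam : ℍ[ℝ]) :
    Fin (n+1) → ℍ[ℝ] := fun i => z i * lam

/-- The quaternionic triple product `⟨p₁,p₂,p₃⟩ = ⟨p₂,p₁⟩⟨p₃,p₂⟩⟨p₁,p₃⟩`. -/
noncomputable def tri {n : ℕ} (p₁ p₂ p₃ : Fin (n+1) → ℍ[ℝ]) : ℍ[ℝ] :=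
  herm p₂ p₁ * herm p₃ p₂ * herm p₁ p₃

/-- The quaternionic Cartan angular invariant
`𝔸(p₁,p₂,p₃) = arccos(Re(−⟨p₁,p₂,p₃⟩)/|⟨p₁,p₂,p₃⟩|)`. -/
noncomputable def cartan {n : ℕ} (p₁ p₂ p₃ : Fin (n+1) → ℍ[ℝ]) : ℝ :=
  Real.arccos ((-(tri p₁ p₂ p₃)).re / ‖tri p₁ p₂ p₃‖)

/-- The quaternionic cross-ratio `𝕏(p₁,p₂,p₃,p₄) = ⟨p₃,p₁⟩⟨p₃,p₂⟩⁻¹⟨p₄,p₂⟩⟨p₄,p₁⟩⁻¹`. -/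
noncomputable def crossX {n : ℕ} (p₁ p₂ p₃ p₄ : Fin (n+1) → ℍ[ℝ]) : ℍ[ℝ] :=
  herm p₃ p₁ * (herm p₃ p₂)⁻¹ * herm p₄ p₂ * (herm p₄ p₁)⁻¹

/-- The group Sp(n,1) of quaternionic matrices preserving the Hermitian form. -/
def SpGrp (n : ℕ) : Set (Matrix (Fin (n+1)) (Fin (n+1)) ℍ[ℝ]) :=
  {g | ∀ z w : Fin (n+1) → ℍ[ℝ], herm (g.mulVec z) (g.mulVec w) = herm z w}

/-- Similarity of quaternions: `b = μ a μ⁻¹` for some nonzero `μ`. -/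
def QSim (a b : ℍ[ℝ]) : Prop := ∃ mu : ℍ[ℝ], mu ≠ 0 ∧ b = mu * a * mu⁻¹

/-- The geodesic `γ(t) = u e^{t/2} + v e^{-t/2}`. -/
noncomputable def geo {n : ℕ} (u v : Fin (n+1) → ℍ[ℝ]) (t : ℝ) : Fin (n+1) → ℍ[ℝ] :=
  fun i => u i * ((Real.exp (t/2) : ℝ) : ℍ[ℝ]) + v i * ((Real.exp (-t/2) : ℝ) : ℍ[ℝ])

/-- `η(u,v,z) = ⟨u,z⟩⟨u,v⟩⁻¹⟨z,v⟩⟨z,z⟩⁻¹`. -/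
noncomputable def etaq {n : ℕ} (u v z : Fin (n+1) → ℍ[ℝ]) : ℍ[ℝ] :=
  herm u z * (herm u v)⁻¹ * herm z v * (herm z z)⁻¹


private lemma expAux (B : ℝ) (hB : 0 ≤ B) {ε : ℝ} (hε : 0 < ε) :
    ∃ t : ℝ, B * Real.exp (-t) ≤ ε := by
  rcases eq_or_lt_of_le hB with h | h
  · exact ⟨0, by rw [← h, zero_mul]; exact hε.le⟩
  · refine ⟨-Real.log (ε / B), ?_⟩
    rw [neg_neg, Real.exp_log (by positivity), mul_comm, div_mul_cancel₀ _ h.ne']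

private lemma keyInf (A B C D : ℝ) (hA : 0 ≤ A) (hB : 0 ≤ B) (hD : 0 < D) :
    ⨅ t : ℝ, (A * Real.exp t + B * Real.exp (-t) + C) / D
      = (2 * Real.sqrt (A * B) + C) / D := by
  have hlb : ∀ t : ℝ, (2 * Real.sqrt (A * B) + C) / D
      ≤ (A * Real.exp t + B * Real.exp (-t) + C) / D := by
    intro t
    gcongr
    have h1 : Real.sqrt (A * B) = Real.sqrt (A * Real.exp t) * Real.sqrt (B * Real.exp (-t)) := by
      rw [← Real.sqrt_mul (by positivity)]
      congr 1
      rw [Real.exp_neg]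
      field_simp
    nlinarith [sq_nonneg (Real.sqrt (A * Real.exp t) - Real.sqrt (B * Real.exp (-t))),
      Real.sq_sqrt (show (0:ℝ) ≤ A * Real.exp t by positivity),
      Real.sq_sqrt (show (0:ℝ) ≤ B * Real.exp (-t) by positivity)]
  have hbdd : BddBelow (Set.range fun t : ℝ => (A * Real.exp t + B * Real.exp (-t) + C) / D) :=
    ⟨_, by rintro x ⟨t, rfl⟩; exact hlb t⟩
  refine le_antisymm ?_ (le_ciInf hlb)
  have hDC : C / D * D = C := div_mul_cancel₀ C hD.ne'
  rcases eq_or_lt_of_le hA with rfl | hApos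
  · rw [show 2 * Real.sqrt (0 * B) + C = C by simp]
    refine le_of_forall_pos_le_add fun ε hε => ?_
    obtain ⟨t, ht⟩ := expAux B hB (mul_pos hε hD)
    refine (ciInf_le hbdd t).trans ?_
    rw [div_le_iff₀ hD]
    nlinarith
  rcases eq_or_lt_of_le hB with rfl | hBpos
  · rw [show 2 * Real.sqrt (A * 0) + C = C by simp]
    refine le_of_forall_pos_le_add fun ε hε => ?_
    obtain ⟨s, hs⟩ := expAux A hA (mul_pos hε hD)
    refine (ciInf_le hbdd (-s)).trans ?_
    rw [div_le_iff₀ hD]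
    have h2 : Real.exp (- -s) = Real.exp s := by rw [neg_neg]
    nlinarith
  · refine (ciInf_le hbdd (Real.log (Real.sqrt B / Real.sqrt A))).trans_eq ?_
    have hsA : Real.sqrt A > 0 := Real.sqrt_pos.2 hApos
    have hsB : Real.sqrt B > 0 := Real.sqrt_pos.2 hBpos
    have h1 : Real.exp (Real.log (Real.sqrt B / Real.sqrt A)) = Real.sqrt B / Real.sqrt A :=
      Real.exp_log (by positivity)
    have h2 : Real.exp (-Real.log (Real.sqrt B / Real.sqrt A)) = Real.sqrt A / Real.sqrt B := by
      rw [Real.exp_neg, h1, inv_div]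
    rw [h1, h2, Real.sqrt_mul hApos.le]
    congr 1
    have sA : Real.sqrt A * Real.sqrt A = A := Real.mul_self_sqrt hApos.le
    have sB : Real.sqrt B * Real.sqrt B = B := Real.mul_self_sqrt hBpos.le
    field_simp
    nlinarith [sA, sB]

section hermAux
variable {n : ℕ}

lemma herm_add_right (z w₁ w₂ : Fin (n+1) → ℍ[ℝ]) :
    herm z (fun i => w₁ i + w₂ i) = herm z w₁ + herm z w₂ := by
  simp only [herm, star_add, add_mul, Finset.sum_add_distrib]
  abel

lemma herm_add_left (z₁ z₂ w : Fin (n+1) → ℍ[ℝ]) :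
    herm (fun i => z₁ i + z₂ i) w = herm z₁ w + herm z₂ w := by
  simp only [herm, mul_add, Finset.sum_add_distrib]
  abel

lemma herm_smul_right (z w : Fin (n+1) → ℍ[ℝ]) (c : ℝ) :
    herm z (fun i => w i * (c : ℍ[ℝ])) = c • herm z w := by
  simp only [herm, star_mul, Quaternion.star_coe, Quaternion.coe_mul_eq_smul,
    smul_mul_assoc, ← Finset.smul_sum, ← smul_add]

lemma herm_smul_left (z w : Fin (n+1) → ℍ[ℝ]) (c : ℝ) :
    herm (fun i => z i * (c : ℍ[ℝ])) w = c • herm z w := by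
  simp only [herm, Quaternion.mul_coe_eq_smul, mul_smul_comm, ← Finset.smul_sum, ← smul_add]

lemma herm_star (z w : Fin (n+1) → ℍ[ℝ]) : herm w z = star (herm z w) := by
  simp only [herm, star_add, star_mul, star_star, star_sum]
  abel

lemma herm_self_real (z : Fin (n+1) → ℍ[ℝ]) : herm z z = (((herm z z).re : ℝ) : ℍ[ℝ]) :=
  Quaternion.star_eq_self.mp (herm_star z z).symm

end hermAux

/-- the infimum over `t ∈ ℝ` of `|⟨z,γ(t)⟩|²/(⟨z,z⟩⟨γ(t),γ(t)⟩)`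
equals `|η| + Re η`, i.e. `cosh²(ρ(γ_{uv},z)/2) = |η| + Re η`. -/
theorem stmt8 {n : ℕ} (hn : 2 ≤ n) (u v z : Fin (n+1) → ℍ[ℝ])
    (hu : u ≠ 0) (hv : v ≠ 0) (huu : herm u u = 0) (hvv : herm v v = 0)
    (hprop : ¬ Prp u v) (huv : herm u v = -1)
    (hz : (herm z z).re < 0) :
    (⨅ t : ℝ, ‖herm z (geo u v t)‖^2
        / ((herm z z).re * (herm (geo u v t) (geo u v t)).re))
      = ‖etaq u v z‖ + (etaq u v z).re := by
  have hzz : herm z z = (((herm z z).re : ℝ) : ℍ[ℝ]) := herm_self_real z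
  set a := herm z u with ha
  set b := herm z v with hb
  set r := (herm z z).re with hr
  have hvu : herm v u = -1 := by rw [herm_star, huv]; simp
  have geo_eq : ∀ t : ℝ, geo u v t = fun i =>
      u i * ((Real.exp (t/2) : ℝ) : ℍ[ℝ]) + v i * ((Real.exp (-t/2) : ℝ) : ℍ[ℝ]) := fun t => rfl
  have expandR : ∀ (t : ℝ) (w : Fin (n+1) → ℍ[ℝ]),
      herm w (geo u v t) = Real.exp (t/2) • herm w u + Real.exp (-t/2) • herm w v := by
    intro t w
    rw [geo_eq t, herm_add_right, herm_smul_right, herm_smul_right]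
  have expandL : ∀ (t : ℝ) (w : Fin (n+1) → ℍ[ℝ]),
      herm (geo u v t) w = Real.exp (t/2) • herm u w + Real.exp (-t/2) • herm v w := by
    intro t w
    rw [geo_eq t, herm_add_left, herm_smul_left, herm_smul_left]
  have hee : ∀ t : ℝ, Real.exp (t/2) * Real.exp (-t/2) = 1 := by
    intro t; rw [← Real.exp_add, show t / 2 + -t / 2 = 0 by ring, Real.exp_zero]
  have hgg : ∀ t : ℝ, (herm (geo u v t) (geo u v t)).re = -2 := by
    intro t
    have h := hee t
    rw [expandR t, expandL t, expandL t, huu, hvv, huv, hvu]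
    simp only [smul_zero, zero_add, add_zero, smul_smul, Quaternion.re_add,
      Quaternion.re_smul, smul_eq_mul, Quaternion.re_neg, Quaternion.re_one]
    nlinarith [h]
  have hfun : ∀ t : ℝ, ‖herm z (geo u v t)‖^2 / ((herm z z).re * (herm (geo u v t) (geo u v t)).re)
      = (‖a‖^2 * Real.exp t + ‖b‖^2 * Real.exp (-t) + 2 * (inner ℝ a b : ℝ)) / (r * (-2)) := by
    intro t
    rw [hgg t, expandR t z, ← hr]
    congr 1
    rw [norm_add_sq_real, norm_smul, norm_smul, real_inner_smul_left, real_inner_smul_right,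
      Real.norm_eq_abs, Real.norm_eq_abs, abs_of_pos (Real.exp_pos _), abs_of_pos (Real.exp_pos _),
      mul_pow, mul_pow]
    have e1 : Real.exp (t/2) ^ 2 = Real.exp t := by
      rw [sq, ← Real.exp_add]; congr 1; ring
    have e2 : Real.exp (-t/2) ^ 2 = Real.exp (-t) := by
      rw [sq, ← Real.exp_add]; congr 1; ring
    rw [e1, e2]
    simp only [← ha, ← hb]
    linear_combination (2 * (inner ℝ a b : ℝ)) * hee t
  have hr0 : r ≠ 0 := ne_of_lt hz
  have heta : etaq u v z = -(star a * b) * (((r⁻¹ : ℝ)) : ℍ[ℝ]) := by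
    rw [etaq, herm_star z u, huv, hzz, ← Quaternion.coe_inv, ← ha, ← hb]
    rw [inv_neg, inv_one]
    simp [mul_neg, neg_mul, mul_assoc]
  have hnorm : ‖etaq u v z‖ = ‖a‖ * ‖b‖ * (-r)⁻¹ := by
    rw [heta, norm_mul, norm_neg, norm_mul, Quaternion.norm_star, Quaternion.norm_coe,
      Real.norm_eq_abs, abs_inv, abs_of_neg hz]
  have hre2 : (etaq u v z).re = -(r⁻¹ * (star a * b).re) := by
    rw [heta, Quaternion.mul_coe_eq_smul]
    simp [Quaternion.re_smul, smul_eq_mul]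
  have hinner : (inner ℝ a b : ℝ) = (star a * b).re := by
    rw [Quaternion.inner_def]
    simp [Quaternion.re_mul, Quaternion.re_star, Quaternion.imI_star, Quaternion.imJ_star,
      Quaternion.imK_star]
  have hsq : Real.sqrt (‖a‖^2 * ‖b‖^2) = ‖a‖ * ‖b‖ := by
    rw [← mul_pow, Real.sqrt_sq (by positivity)]
  have final : (2 * Real.sqrt (‖a‖^2 * ‖b‖^2) + 2 * (inner ℝ a b : ℝ)) / (r * (-2))
      = ‖etaq u v z‖ + (etaq u v z).re := by
    have hrr : r * r⁻¹ = 1 := mul_inv_cancel₀ hr0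
    rw [hnorm, hre2, hinner, hsq]
    field_simp
    linear_combination
  rw [iInf_congr hfun, keyInf _ _ _ _ (by positivity) (by positivity) (by nlinarith [hz])]
  exact final
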